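/- In the string rewriting system on the alphabet {s,t} with the two rules sts ⇒ tst and tst ⇒ sts (presenting the braid monoid B₃⁺), every word is congruent to a word of the form (sts)^N v where N is maximal, and this word is uniquely determined; i.e., if (sts)^N v and (sts)^N w (with v, w containing no factor sts or tst among the relevant positions, and N maximal for each) are congruent, then v = w. -/

import Mathlib

/-- The two generators `s`, `t` of the braid monoid `B₃⁺`. -/
inductive B3Gen : Type
  | s : B3Gen
  | t : B3Gen

open B3Gen

/-- The rules `sts ⇒ tst` and `tst ⇒ sts`. -/
inductive B3Rule : List B3Gen → List B3Gen → Prop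
  | alpha : B3Rule [s, t, s] [t, s, t]
  | beta : B3Rule [t, s, t] [s, t, s]

/-- One-step rewriting relation of a string rewriting system `R`. -/
def Step {A : Type*} (R : List A → List A → Prop) (u v : List A) : Prop :=
  ∃ l r a b, R a b ∧ u = l ++ a ++ r ∧ v = l ++ b ++ r

/-- The word `(sts)^n`. -/
def stsPow (n : ℕ) : List B3Gen := (List.replicate n [s, t, s]).flatten

namespace B3QNF

open Relation


open Relation

/-- generic helpers -/
theorem step_at {A : Type*} {R : List A → List A → Prop} {a b : List A} (l r : List A)
    (h : R a b) : Step R (l ++ a ++ r) (l ++ b ++ r) := ⟨l, r, a, b, h, rfl, rfl⟩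

theorem step_append {A : Type*} {R : List A → List A → Prop} {u v : List A}
    (h : Step R u v) (x y : List A) : Step R (x ++ u ++ y) (x ++ v ++ y) := by
  obtain ⟨l, r, a, b, hr, rfl, rfl⟩ := h
  exact ⟨x ++ l, r ++ y, a, b, hr, by simp, by simp⟩

theorem rtg_append {A : Type*} {R : List A → List A → Prop} {u v : List A}
    (h : ReflTransGen (Step R) u v) (x y : List A) :
    ReflTransGen (Step R) (x ++ u ++ y) (x ++ v ++ y) := by
  induction h with
  | refl => exact .refl
  | tail _ h ih => exact ih.tail (step_append h x y)

theorem eqv_append {A : Type*} {R : List A → List A → Prop} {u v : List A}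
    (h : EqvGen (Step R) u v) (x y : List A) :
    EqvGen (Step R) (x ++ u ++ y) (x ++ v ++ y) := by
  induction h with
  | rel _ _ h => exact .rel _ _ (step_append h x y)
  | refl _ => exact .refl _
  | symm _ _ _ ih => exact ih.symm
  | trans _ _ _ _ _ ih1 ih2 => exact ih1.trans _ _ _ ih2

theorem rtg_eqv {A : Type*} {R : A → A → Prop} {u v : A}
    (h : ReflTransGen R u v) : EqvGen R u v := by
  induction h with
  | refl => exact .refl _
  | tail _ h ih => exact ih.trans _ _ _ (.rel _ _ h)

/-- length preservation for the original system -/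
theorem b3step_length {u v : List B3Gen} (h : Step B3Rule u v) : u.length = v.length := by
  obtain ⟨l, r, a, b, hr, rfl, rfl⟩ := h
  cases hr <;> simp

theorem b3eqv_length {u v : List B3Gen} (h : EqvGen (Step B3Rule) u v) :
    u.length = v.length := by
  induction h with
  | rel _ _ h => exact b3step_length h
  | refl _ => rfl
  | symm _ _ _ ih => exact ih.symm
  | trans _ _ _ _ _ ih1 ih2 => exact ih1.trans ih2

theorem stsPow_length (n : ℕ) : (stsPow n).length = 3 * n := by
  induction n with
  | zero => rfl
  | succ n ih => simp [stsPow, List.replicate_succ] at ih ⊢; omega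

theorem stsPow_succ (n : ℕ) : stsPow (n + 1) = [s, t, s] ++ stsPow n := by
  simp [stsPow, List.replicate_succ]

theorem stsPow_succ' (n : ℕ) : stsPow (n + 1) = stsPow n ++ [s, t, s] := by
  simp [stsPow, List.replicate_succ']


/-- the swap automorphism -/
def sw : B3Gen → B3Gen
  | B3Gen.s => B3Gen.t
  | B3Gen.t => B3Gen.s

/-- `x · Δ ≡ Δ · σ(x)` -/
theorem comm_delta (x : List B3Gen) :
    EqvGen (Step B3Rule) (x ++ [s, t, s]) ([s, t, s] ++ x.map sw) := by
  induction x with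
  | nil => simp; exact .refl _
  | cons c x ih =>
    have h1 : EqvGen (Step B3Rule) (c :: (x ++ [s, t, s])) (c :: ([s, t, s] ++ x.map sw)) := by
      simpa using eqv_append ih [c] []
    refine .trans _ _ _ (by simpa using h1) ?_
    have h2 : EqvGen (Step B3Rule) (c :: [s, t, s] ++ x.map sw)
        (([s, t, s] ++ [sw c]) ++ x.map sw) := by
      apply eqv_append _ [] (x.map sw)
      cases c
      · -- s : ssts ≡ stst : step stst → ssts (beta at l=[s]) ; stst → ? need ssts ≡ stst
        exact .symm _ _ (.rel _ _ ⟨[s], [], _, _, B3Rule.beta, rfl, rfl⟩)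
      · -- t : tsts ≡ stss : step tsts → stss (beta at l=[])
        exact .rel _ _ ⟨[], [B3Gen.s], _, _, B3Rule.beta, rfl, rfl⟩
    simpa using h2

/-- if `v` contains `sts` or `tst`, then `Δ^N v ≡ Δ^(N+1) v'` for some `v'` -/
theorem absorb {N : ℕ} {v p q : List B3Gen} (h : v = p ++ [s, t, s] ++ q ∨ v = p ++ [t, s, t] ++ q) :
    ∃ v', EqvGen (Step B3Rule) (stsPow N ++ v) (stsPow (N + 1) ++ v') := by
  refine ⟨p.map sw ++ q, ?_⟩
  have key : EqvGen (Step B3Rule) (p ++ [s, t, s] ++ q) ([s, t, s] ++ (p.map sw ++ q)) := by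
    have := eqv_append (comm_delta p) [] q
    simpa using this
  have step1 : EqvGen (Step B3Rule) v ([s, t, s] ++ (p.map sw ++ q)) := by
    rcases h with rfl | rfl
    · exact key
    · exact .trans _ _ _ (.rel _ _ ⟨p, q, _, _, B3Rule.beta, rfl, rfl⟩) key
  have := eqv_append step1 (stsPow N) []
  simp only [List.append_nil] at this
  refine this.trans _ _ _ ?_
  rw [stsPow_succ', List.append_assoc]
  exact .refl _

/-- existence part -/
theorem exists_part (u : List B3Gen) : ∃ (N : ℕ) (v : List B3Gen),
    Relation.EqvGen (Step B3Rule) u (stsPow N ++ v) ∧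
    ¬ ∃ v' : List B3Gen, Relation.EqvGen (Step B3Rule) u (stsPow (N + 1) ++ v') := by
  by_contra h
  push_neg at h
  have key : ∀ N : ℕ, ∃ v, Relation.EqvGen (Step B3Rule) u (stsPow N ++ v) := by
    intro N
    induction N with
    | zero => exact ⟨u, by simpa [stsPow] using Relation.EqvGen.refl u⟩
    | succ n ih => obtain ⟨v, hv⟩ := ih; exact h n v hv
  obtain ⟨v, hv⟩ := key (u.length + 1)
  have := b3eqv_length hv
  simp [stsPow_length] at this
  omega


inductive G3 : Type
  | S : G3
  | T : G3
  | A : G3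
deriving DecidableEq

open G3

inductive R3 : List G3 → List G3 → Prop
  | sts : R3 [S, T, S] [A]
  | tst : R3 [T, S, T] [A]
  | sa : R3 [S, A] [A, T]
  | ta : R3 [T, A] [A, S]

/-- number of `A`'s -/
def cA (w : List G3) : ℕ := w.count A
/-- number of non-`A`'s -/
def cN (w : List G3) : ℕ := w.countP (fun c => c ≠ A)

/-- inversions: pairs (i < j) with w_i ≠ A and w_j = A -/
def inv : List G3 → ℕ
  | [] => 0
  | c :: w => (if c = A then 0 else cA w) + inv w

theorem cA_append (x y : List G3) : cA (x ++ y) = cA x + cA y := by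
  simp [cA, List.count_append]

theorem cN_append (x y : List G3) : cN (x ++ y) = cN x + cN y := by
  simp [cN, List.countP_append]

theorem inv_append (x y : List G3) :
    inv (x ++ y) = inv x + inv y + cN x * cA y := by
  induction x with
  | nil => simp [inv, cN]
  | cons c x ih =>
    by_cases hc : c = A <;>
      simp [inv, cA, cN, List.countP_cons, List.count_cons, hc, ih, cA_append] <;> ring

theorem cN_le_length (x : List G3) : cN x ≤ x.length := List.countP_le_length

/-- the termination measure -/
def mu (w : List G3) : ℕ := w.length * w.length + inv w

theorem step_mu {u v : List G3} (h : Step R3 u v) : mu v < mu u := by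
  obtain ⟨l, r, a, b, hr, rfl, rfl⟩ := h
  have hl := cN_le_length l
  cases hr <;>
  · simp only [mu, inv_append, cA_append, cN_append, List.length_append] at *
    simp only [inv, cA, cN, List.count_cons, List.count_nil, List.countP_cons,
      List.countP_nil, List.length] at *
    simp at *
    try nlinarith [hl]

open Relation

theorem split3 {α : Type*} {l₁ a₁ r₁ l₂ a₂ r₂ : List α}
    (h : l₁ ++ a₁ ++ r₁ = l₂ ++ a₂ ++ r₂) (hl : l₁.length ≤ l₂.length) :
    (∃ m, l₂ = l₁ ++ a₁ ++ m ∧ r₁ = m ++ a₂ ++ r₂) ∨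
    (∃ m q, a₁ = m ++ q ∧ q ≠ [] ∧ l₂ = l₁ ++ m ∧ q ++ r₁ = a₂ ++ r₂) := by
  have hp : l₁ <+: l₂ := by
    have h1 : l₁ <+: l₂ ++ a₂ ++ r₂ := ⟨a₁ ++ r₁, by simpa using h⟩
    have hb : l₂ <+: l₂ ++ a₂ ++ r₂ := ⟨a₂ ++ r₂, by simp⟩
    exact List.prefix_of_prefix_length_le h1 hb hl
  obtain ⟨m₀, rfl⟩ := hp
  have h2 : a₁ ++ r₁ = m₀ ++ (a₂ ++ r₂) := by
    apply List.append_cancel_left (as := l₁)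
    simpa using h
  by_cases hlen : a₁.length ≤ m₀.length
  · have hp2 : a₁ <+: m₀ := by
      have h1 : a₁ <+: m₀ ++ (a₂ ++ r₂) := ⟨r₁, h2⟩
      have hb : m₀ <+: m₀ ++ (a₂ ++ r₂) := ⟨a₂ ++ r₂, rfl⟩
      exact List.prefix_of_prefix_length_le h1 hb hlen
    obtain ⟨m, rfl⟩ := hp2
    left
    refine ⟨m, by simp, ?_⟩
    apply List.append_cancel_left (as := a₁)
    simpa using h2
  · have hp2 : m₀ <+: a₁ := by
      have h1 : m₀ <+: a₁ ++ r₁ := ⟨a₂ ++ r₂, h2.symm⟩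
      have hb : a₁ <+: a₁ ++ r₁ := ⟨r₁, rfl⟩
      exact List.prefix_of_prefix_length_le h1 hb (le_of_lt (not_le.mp hlen))
    obtain ⟨q, rfl⟩ := hp2
    right
    refine ⟨m₀, q, rfl, ?_, rfl, ?_⟩
    · intro hq; rw [hq] at hlen; simp at hlen
    · have := h2
      rw [List.append_assoc] at this
      have := List.append_cancel_left this
      simpa using this

theorem one {x y : List G3} (l r a b : List G3) (h : R3 a b)
    (hx : x = l ++ a ++ r) (hy : y = l ++ b ++ r) : ReflTransGen (Step R3) x y :=
  ReflTransGen.single ⟨l, r, a, b, h, hx, hy⟩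

theorem rtg_of_eq {x y : List G3} (h : x = y) : ReflTransGen (Step R3) x y := h ▸ .refl

theorem lc_aux (l₁ r₁ a₁ b₁ l₂ r₂ a₂ b₂ : List G3)
    (h₁ : R3 a₁ b₁) (h₂ : R3 a₂ b₂) (he : l₁ ++ a₁ ++ r₁ = l₂ ++ a₂ ++ r₂)
    (hl : l₁.length ≤ l₂.length) :
    ∃ z, ReflTransGen (Step R3) (l₁ ++ b₁ ++ r₁) z ∧
         ReflTransGen (Step R3) (l₂ ++ b₂ ++ r₂) z := by
  rcases split3 he hl with ⟨m, rfl, rfl⟩ | ⟨m, q, ha, hq, rfl, hqr⟩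
  · -- disjoint
    refine ⟨l₁ ++ b₁ ++ m ++ b₂ ++ r₂, ?_, ?_⟩
    · exact one (l₁ ++ b₁ ++ m) r₂ _ _ h₂ (by simp) (by simp)
    · exact one l₁ (m ++ b₂ ++ r₂) _ _ h₁ (by simp) (by simp)
  · -- overlap
    cases h₁
    case sts =>
      rcases m with _ | ⟨c, _ | ⟨d, _ | ⟨e, m⟩⟩⟩
      · -- m = [], q = [S,T,S]
        subst ha
        cases h₂
        case sts =>
          simp only [List.cons_append, List.nil_append, List.cons.injEq, true_and] at hqr
          subst hqr
          exact ⟨l₁ ++ [A] ++ r₁, .refl, rtg_of_eq (by simp)⟩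
        case tst => simp at hqr
        case sa => simp at hqr
        case ta => simp at hqr
      · -- m = [c]
        injection ha with h1 ha2
        subst h1; subst ha2
        cases h₂
        case sts => simp at hqr
        case tst =>
          simp only [List.cons_append, List.nil_append, List.cons.injEq, true_and] at hqr
          subst hqr
          refine ⟨l₁ ++ [A, T] ++ r₂, rtg_of_eq (by simp), ?_⟩
          exact one l₁ r₂ _ _ R3.sa (by simp) (by simp)
        case sa => simp at hqr
        case ta => simp at hqr
      · -- m = [c, d]
        injection ha with h1 ha2
        injection ha2 with h2 ha3
        subst h1; subst h2; subst ha3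
        cases h₂
        case sts =>
          simp only [List.cons_append, List.nil_append, List.cons.injEq, true_and] at hqr
          subst hqr
          refine ⟨l₁ ++ [A, T, S] ++ r₂, rtg_of_eq (by simp), ?_⟩
          have s1 : ReflTransGen (Step R3) ((l₁ ++ [S, T]) ++ [A] ++ r₂)
              (l₁ ++ [S, A, S] ++ r₂) := one (l₁ ++ [S]) r₂ _ _ R3.ta (by simp) (by simp)
          have s2 : ReflTransGen (Step R3) (l₁ ++ [S, A, S] ++ r₂)
              (l₁ ++ [A, T, S] ++ r₂) := one l₁ ([S] ++ r₂) _ _ R3.sa (by simp) (by simp)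
          exact s1.trans s2
        case tst => simp at hqr
        case sa =>
          simp only [List.cons_append, List.nil_append, List.cons.injEq, true_and] at hqr
          subst hqr
          refine ⟨l₁ ++ [A, A] ++ r₂, rtg_of_eq (by simp), ?_⟩
          have s1 : ReflTransGen (Step R3) ((l₁ ++ [S, T]) ++ [A, T] ++ r₂)
              (l₁ ++ [S, A, S, T] ++ r₂) := one (l₁ ++ [S]) ([T] ++ r₂) _ _ R3.ta (by simp) (by simp)
          have s2 : ReflTransGen (Step R3) (l₁ ++ [S, A, S, T] ++ r₂)
              (l₁ ++ [A, T, S, T] ++ r₂) := one l₁ ([S, T] ++ r₂) _ _ R3.sa (by simp) (by simp)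
          have s3 : ReflTransGen (Step R3) (l₁ ++ [A, T, S, T] ++ r₂)
              (l₁ ++ [A, A] ++ r₂) := one (l₁ ++ [A]) r₂ _ _ R3.tst (by simp) (by simp)
          exact (s1.trans s2).trans s3
        case ta => simp at hqr
      · -- m too long
        injection ha with h1 ha2
        injection ha2 with h2 ha3
        injection ha3 with h3 ha4
        rcases List.append_eq_nil_iff.mp ha4.symm with ⟨-, h⟩
        exact absurd h hq
    case tst =>
      rcases m with _ | ⟨c, _ | ⟨d, _ | ⟨e, m⟩⟩⟩
      · subst ha
        cases h₂
        case tst =>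
          simp only [List.cons_append, List.nil_append, List.cons.injEq, true_and] at hqr
          subst hqr
          exact ⟨l₁ ++ [A] ++ r₁, .refl, rtg_of_eq (by simp)⟩
        case sts => simp at hqr
        case sa => simp at hqr
        case ta => simp at hqr
      · injection ha with h1 ha2
        subst h1; subst ha2
        cases h₂
        case tst => simp at hqr
        case sts =>
          simp only [List.cons_append, List.nil_append, List.cons.injEq, true_and] at hqr
          subst hqr
          refine ⟨l₁ ++ [A, S] ++ r₂, rtg_of_eq (by simp), ?_⟩
          exact one l₁ r₂ _ _ R3.ta (by simp) (by simp)
        case sa => simp at hqr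
        case ta => simp at hqr
      · injection ha with h1 ha2
        injection ha2 with h2 ha3
        subst h1; subst h2; subst ha3
        cases h₂
        case tst =>
          simp only [List.cons_append, List.nil_append, List.cons.injEq, true_and] at hqr
          subst hqr
          refine ⟨l₁ ++ [A, S, T] ++ r₂, rtg_of_eq (by simp), ?_⟩
          have s1 : ReflTransGen (Step R3) ((l₁ ++ [T, S]) ++ [A] ++ r₂)
              (l₁ ++ [T, A, T] ++ r₂) := one (l₁ ++ [T]) r₂ _ _ R3.sa (by simp) (by simp)
          have s2 : ReflTransGen (Step R3) (l₁ ++ [T, A, T] ++ r₂)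
              (l₁ ++ [A, S, T] ++ r₂) := one l₁ ([T] ++ r₂) _ _ R3.ta (by simp) (by simp)
          exact s1.trans s2
        case sts => simp at hqr
        case ta =>
          simp only [List.cons_append, List.nil_append, List.cons.injEq, true_and] at hqr
          subst hqr
          refine ⟨l₁ ++ [A, A] ++ r₂, rtg_of_eq (by simp), ?_⟩
          have s1 : ReflTransGen (Step R3) ((l₁ ++ [T, S]) ++ [A, S] ++ r₂)
              (l₁ ++ [T, A, T, S] ++ r₂) := one (l₁ ++ [T]) ([S] ++ r₂) _ _ R3.sa (by simp) (by simp)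
          have s2 : ReflTransGen (Step R3) (l₁ ++ [T, A, T, S] ++ r₂)
              (l₁ ++ [A, S, T, S] ++ r₂) := one l₁ ([T, S] ++ r₂) _ _ R3.ta (by simp) (by simp)
          have s3 : ReflTransGen (Step R3) (l₁ ++ [A, S, T, S] ++ r₂)
              (l₁ ++ [A, A] ++ r₂) := one (l₁ ++ [A]) r₂ _ _ R3.sts (by simp) (by simp)
          exact (s1.trans s2).trans s3
        case sa => simp at hqr
      · injection ha with h1 ha2
        injection ha2 with h2 ha3
        injection ha3 with h3 ha4
        rcases List.append_eq_nil_iff.mp ha4.symm with ⟨-, h⟩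
        exact absurd h hq
    case sa =>
      rcases m with _ | ⟨c, _ | ⟨d, m⟩⟩
      · subst ha
        cases h₂
        case sa =>
          simp only [List.cons_append, List.nil_append, List.cons.injEq, true_and] at hqr
          subst hqr
          exact ⟨l₁ ++ [A, T] ++ r₁, .refl, rtg_of_eq (by simp)⟩
        case sts => simp at hqr
        case tst => simp at hqr
        case ta => simp at hqr
      · injection ha with h1 ha2
        subst h1; subst ha2
        cases h₂ <;> simp at hqr
      · injection ha with h1 ha2
        injection ha2 with h2 ha3
        rcases List.append_eq_nil_iff.mp ha3.symm with ⟨-, h⟩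
        exact absurd h hq
    case ta =>
      rcases m with _ | ⟨c, _ | ⟨d, m⟩⟩
      · subst ha
        cases h₂
        case ta =>
          simp only [List.cons_append, List.nil_append, List.cons.injEq, true_and] at hqr
          subst hqr
          exact ⟨l₁ ++ [A, S] ++ r₁, .refl, rtg_of_eq (by simp)⟩
        case sts => simp at hqr
        case tst => simp at hqr
        case sa => simp at hqr
      · injection ha with h1 ha2
        subst h1; subst ha2
        cases h₂ <;> simp at hqr
      · injection ha with h1 ha2
        injection ha2 with h2 ha3
        rcases List.append_eq_nil_iff.mp ha3.symm with ⟨-, h⟩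
        exact absurd h hq

theorem lc {u v₁ v₂ : List G3} (h1 : Step R3 u v₁) (h2 : Step R3 u v₂) :
    ∃ z, ReflTransGen (Step R3) v₁ z ∧ ReflTransGen (Step R3) v₂ z := by
  obtain ⟨l₁, r₁, a₁, b₁, hr₁, rfl, rfl⟩ := h1
  obtain ⟨l₂, r₂, a₂, b₂, hr₂, he, rfl⟩ := h2
  rcases le_total l₁.length l₂.length with hl | hl
  · exact lc_aux l₁ r₁ a₁ b₁ l₂ r₂ a₂ b₂ hr₁ hr₂ he hl
  · obtain ⟨z, hz2, hz1⟩ := lc_aux l₂ r₂ a₂ b₂ l₁ r₁ a₁ b₁ hr₂ hr₁ he.symm hl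
    exact ⟨z, hz1, hz2⟩

theorem newman : ∀ (n : ℕ) (u : List G3), mu u ≤ n → ∀ v w,
    ReflTransGen (Step R3) u v → ReflTransGen (Step R3) u w →
    ∃ z, ReflTransGen (Step R3) v z ∧ ReflTransGen (Step R3) w z := by
  intro n
  induction n with
  | zero =>
    intro u hu v w huv huw
    have hv : u = v := by
      rcases huv.cases_head with h | ⟨c, hc, -⟩
      · exact h
      · exact absurd (step_mu hc) (by omega)
    have hw : u = w := by
      rcases huw.cases_head with h | ⟨c, hc, -⟩
      · exact h
      · exact absurd (step_mu hc) (by omega)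
    exact ⟨u, hv ▸ .refl, hw ▸ .refl⟩
  | succ n ih =>
    intro u hu v w huv huw
    rcases huv.cases_head with rfl | ⟨v₁, hs₁, hv₁⟩
    · exact ⟨w, huw, .refl⟩
    rcases huw.cases_head with rfl | ⟨w₁, hs₂, hw₁⟩
    · exact ⟨v, .refl, huv⟩
    obtain ⟨d, hd₁, hd₂⟩ := lc hs₁ hs₂
    have hmu₁ : mu v₁ ≤ n := by have := step_mu hs₁; omega
    have hmu₂ : mu w₁ ≤ n := by have := step_mu hs₂; omega
    obtain ⟨e, he₁, he₂⟩ := ih v₁ hmu₁ v d hv₁ hd₁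
    obtain ⟨g, hg₁, hg₂⟩ := ih w₁ hmu₂ w e hw₁ (hd₂.trans he₂)
    exact ⟨g, he₁.trans hg₂, hg₁⟩

theorem conf {u v w : List G3} (h1 : ReflTransGen (Step R3) u v)
    (h2 : ReflTransGen (Step R3) u w) :
    ∃ z, ReflTransGen (Step R3) v z ∧ ReflTransGen (Step R3) w z :=
  newman (mu u) u le_rfl v w h1 h2

theorem eqv_join {u v : List G3} (h : EqvGen (Step R3) u v) :
    ∃ z, ReflTransGen (Step R3) u z ∧ ReflTransGen (Step R3) v z := by
  set r := ReflTransGen (Step R3) with hr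
  have hE : Equivalence (Join (ReflTransGen r)) := by
    apply Relation.equivalence_join_reflTransGen
    intro a b c hab hac
    obtain ⟨d, hbd, hcd⟩ := conf hab hac
    exact ⟨d, .single hbd, .single hcd⟩
  have key : Join (ReflTransGen r) u v := by
    induction h with
    | rel x y hxy => exact ⟨y, .single (.single hxy), .refl⟩
    | refl x => exact hE.refl x
    | symm x y _ ihxy => exact hE.symm ihxy
    | trans x y z _ _ ih1 ih2 => exact hE.trans ih1 ih2
  rw [hr, Relation.reflTransGen_idem] at key
  exact key



/-- embedding and projection between the alphabets -/
def f : B3Gen → G3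
  | B3Gen.s => G3.S
  | B3Gen.t => G3.T

def g : G3 → B3Gen
  | G3.S => B3Gen.s
  | G3.T => B3Gen.t
  | G3.A => B3Gen.s

theorem gf (x : B3Gen) : g (f x) = x := by cases x <;> rfl

theorem map_gf (v : List B3Gen) : List.map (g ∘ f) v = v := by
  simp [Function.comp_def, gf]

theorem phi_eqv {u v : List B3Gen} (h : Relation.EqvGen (Step B3Rule) u v) :
    EqvGen (Step R3) (u.map f) (v.map f) := by
  induction h with
  | rel x y hxy =>
    obtain ⟨l, r, a, b, hr, rfl, rfl⟩ := hxy
    cases hr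
    case alpha =>
      refine EqvGen.trans _ _ _
        (.rel _ _ ⟨l.map f, r.map f, _, _, R3.sts, by simp [f], rfl⟩)
        (EqvGen.symm _ _ (.rel _ _ ⟨l.map f, r.map f, _, _, R3.tst, by simp [f], rfl⟩))
    case beta =>
      refine EqvGen.trans _ _ _
        (.rel _ _ ⟨l.map f, r.map f, _, _, R3.tst, by simp [f], rfl⟩)
        (EqvGen.symm _ _ (.rel _ _ ⟨l.map f, r.map f, _, _, R3.sts, by simp [f], rfl⟩))
  | refl x => exact .refl _
  | symm _ _ _ ih => exact ih.symm
  | trans _ _ _ _ _ ih1 ih2 => exact ih1.trans _ _ _ ih2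

theorem map_stsPow (n : ℕ) (v : List B3Gen) :
    (stsPow n ++ v).map f = (List.replicate n [S, T, S]).flatten ++ v.map f := by
  induction n with
  | zero => simp [stsPow]
  | succ n ih =>
    rw [stsPow_succ]
    simp only [List.replicate_succ, List.flatten_cons, List.append_assoc, List.map_append] at ih ⊢
    simpa [f] using ih

theorem rtg_pow (n : ℕ) (x : List G3) :
    ReflTransGen (Step R3) ((List.replicate n [S, T, S]).flatten ++ x)
      (List.replicate n A ++ x) := by
  induction n with
  | zero => exact rtg_of_eq (by simp)
  | succ n ih =>
    have s1 : Step R3 ([S, T, S] ++ ((List.replicate n [S, T, S]).flatten ++ x))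
        ([A] ++ ((List.replicate n [S, T, S]).flatten ++ x)) :=
      ⟨[], _, _, _, R3.sts, rfl, rfl⟩
    have s2 : ReflTransGen (Step R3) ([A] ++ ((List.replicate n [S, T, S]).flatten ++ x))
        ([A] ++ (List.replicate n A ++ x)) := by
      have := rtg_append ih [A] []
      simpa using this
    refine ReflTransGen.trans (ReflTransGen.head ?_ s2) (rtg_of_eq (by simp [List.replicate_succ]))
    simpa [List.replicate_succ] using s1

theorem not_A_mem (v : List B3Gen) : A ∉ v.map f := by
  simp only [List.mem_map, not_exists]
  rintro x ⟨-, hx⟩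
  cases x <;> simp [f] at hx

theorem nored (v : List B3Gen)
    (h1 : ¬∃ p q, v = p ++ [s, t, s] ++ q)
    (h2 : ¬∃ p q, v = p ++ [t, s, t] ++ q) :
    ∀ n z, ¬ Step R3 (List.replicate n A ++ v.map f) z := by
  intro n
  induction n with
  | zero =>
    rintro z ⟨l, r, a, b, hr, he, -⟩
    simp only [List.replicate, List.nil_append] at he
    cases hr
    case sts =>
      apply h1
      refine ⟨l.map g, r.map g, ?_⟩
      have := congrArg (List.map g) he
      simpa [List.map_map, map_gf, g] using this
    case tst =>
      apply h2
      refine ⟨l.map g, r.map g, ?_⟩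
      have := congrArg (List.map g) he
      simpa [List.map_map, map_gf, g] using this
    case sa =>
      apply not_A_mem v
      rw [he]; simp
    case ta =>
      apply not_A_mem v
      rw [he]; simp
  | succ n ih =>
    rintro z ⟨l, r, a, b, hr, he, -⟩
    rw [List.replicate_succ, List.cons_append] at he
    cases l with
    | nil =>
      simp only [List.nil_append] at he
      cases hr <;> simp at he
    | cons c l' =>
      rw [List.cons_append, List.cons_append] at he
      injection he with h1 h2
      exact ih (l' ++ b ++ r) ⟨l', r, a, b, hr, h2, rfl⟩

theorem normal_rtg_eq {x y : List G3} (hx : ∀ z, ¬ Step R3 x z)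
    (h : ReflTransGen (Step R3) x y) : x = y := by
  rcases h.cases_head with h | ⟨c, hc, -⟩
  · exact h
  · exact absurd hc (hx c)

theorem unique_part (N : ℕ) (v w : List B3Gen)
    (h : Relation.EqvGen (Step B3Rule) (stsPow N ++ v) (stsPow N ++ w))
    (hv : ¬ ∃ v', Relation.EqvGen (Step B3Rule) (stsPow N ++ v) (stsPow (N + 1) ++ v'))
    (hw : ¬ ∃ w', Relation.EqvGen (Step B3Rule) (stsPow N ++ w) (stsPow (N + 1) ++ w')) :
    v = w := by
  have hv1 : ¬∃ p q, v = p ++ [s, t, s] ++ q := fun ⟨p, q, hpq⟩ => hv (absorb (Or.inl hpq))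
  have hv2 : ¬∃ p q, v = p ++ [t, s, t] ++ q := fun ⟨p, q, hpq⟩ => hv (absorb (Or.inr hpq))
  have hw1 : ¬∃ p q, w = p ++ [s, t, s] ++ q := fun ⟨p, q, hpq⟩ => hw (absorb (Or.inl hpq))
  have hw2 : ¬∃ p q, w = p ++ [t, s, t] ++ q := fun ⟨p, q, hpq⟩ => hw (absorb (Or.inr hpq))
  have h3 := phi_eqv h
  have r1 : ReflTransGen (Step R3) ((stsPow N ++ v).map f)
      (List.replicate N A ++ v.map f) := by
    rw [map_stsPow]; exact rtg_pow N _
  have r2 : ReflTransGen (Step R3) ((stsPow N ++ w).map f)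
      (List.replicate N A ++ w.map f) := by
    rw [map_stsPow]; exact rtg_pow N _
  have h4 : EqvGen (Step R3) (List.replicate N A ++ v.map f)
      (List.replicate N A ++ w.map f) :=
    ((rtg_eqv r1).symm _ _).trans _ _ _ (h3.trans _ _ _ (rtg_eqv r2))
  obtain ⟨z, z1, z2⟩ := eqv_join h4
  have e1 := normal_rtg_eq (nored v hv1 hv2 N) z1
  have e2 := normal_rtg_eq (nored w hw1 hw2 N) z2
  have : v.map f = w.map f := List.append_cancel_left (e1.trans e2.symm)
  have := congrArg (List.map g) this
  simpa [List.map_map, map_gf] using this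

end B3QNF

/-- In the presentation `⟨ s, t | sts ⇒ tst, tst ⇒ sts ⟩` of `B₃⁺`, every word
is congruent to a word `(sts)^N v` with `N` maximal, and such a word is unique:
if `(sts)^N v` and `(sts)^N w`, each with `N` maximal, are congruent, then
`v = w`. -/
theorem b3_qnf_exists_unique :
    (∀ u : List B3Gen, ∃ (N : ℕ) (v : List B3Gen),
      Relation.EqvGen (Step B3Rule) u (stsPow N ++ v) ∧
      ¬ ∃ v' : List B3Gen, Relation.EqvGen (Step B3Rule) u (stsPow (N + 1) ++ v')) ∧
    (∀ (N : ℕ) (v w : List B3Gen),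
      Relation.EqvGen (Step B3Rule) (stsPow N ++ v) (stsPow N ++ w) →
      (¬ ∃ v', Relation.EqvGen (Step B3Rule) (stsPow N ++ v) (stsPow (N + 1) ++ v')) →
      (¬ ∃ w', Relation.EqvGen (Step B3Rule) (stsPow N ++ w) (stsPow (N + 1) ++ w')) →
      v = w) := by
  exact ⟨B3QNF.exists_part, B3QNF.unique_part⟩
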